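/- Let (A,b,c) and (A',b',c') be realizations of the same formal power series on Hilbert spaces H, H', with (A',b',c') observable. Define S₀ on span{p(A)c : p polynomial} by S₀(p(A)c) = p(A')c'. Then S₀ is closable: if xₙ = pₙ(A)c → 0 in H and S₀xₙ = pₙ(A')c' → y' in H', then y' = 0. -/

import Mathlib

open Filter Polynomial ContinuousLinearMap

lemma adjoint_pow_inner {H : Type*} [NormedAddCommGroup H] [InnerProductSpace ℂ H]
    [CompleteSpace H] (A : H →L[ℂ] H) (n : ℕ) (x y : H) :
    @inner ℂ H _ (((ContinuousLinearMap.adjoint A) ^ n) x) y = @inner ℂ H _ x ((A ^ n) y) := by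
  induction n generalizing x y with
  | zero => simp
  | succ k ih =>
      rw [pow_succ, pow_succ']
      simp only [ContinuousLinearMap.mul_apply]
      rw [ih, ContinuousLinearMap.adjoint_inner_left]

theorem stmt12 {H H' : Type*}
    [NormedAddCommGroup H] [InnerProductSpace ℂ H] [CompleteSpace H]
    [NormedAddCommGroup H'] [InnerProductSpace ℂ H'] [CompleteSpace H']
    (A : H →L[ℂ] H) (b c : H) (A' : H' →L[ℂ] H') (b' c' : H')
    (hsame : ∀ p : Polynomial ℂ,
      @inner ℂ H _ b ((Polynomial.aeval A p) c) =
        @inner ℂ H' _ b' ((Polynomial.aeval A' p) c'))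
    (hobs : (Submodule.span ℂ
        (Set.range fun n : ℕ => ((ContinuousLinearMap.adjoint A') ^ n) b')).topologicalClosure
          = ⊤) :
    ∀ (p : ℕ → Polynomial ℂ) (y' : H'),
      Filter.Tendsto (fun n => (Polynomial.aeval A (p n)) c) Filter.atTop (nhds 0) →
      Filter.Tendsto (fun n => (Polynomial.aeval A' (p n)) c') Filter.atTop (nhds y') →
      y' = 0 := by
  intro p y' hA hA'
  set K := Submodule.span ℂ
      (Set.range fun n : ℕ => ((ContinuousLinearMap.adjoint A') ^ n) b') with hK
  have key : ∀ n : ℕ, @inner ℂ H' _ (((ContinuousLinearMap.adjoint A') ^ n) b') y' = 0 := by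
    intro n
    have h1 : Tendsto (fun k => @inner ℂ H' _ (((ContinuousLinearMap.adjoint A') ^ n) b')
        ((Polynomial.aeval A' (p k)) c')) atTop
        (nhds (@inner ℂ H' _ (((ContinuousLinearMap.adjoint A') ^ n) b') y')) :=
      (continuous_const.inner continuous_id).continuousAt.tendsto.comp hA'
    have heq : ∀ k, @inner ℂ H' _ (((ContinuousLinearMap.adjoint A') ^ n) b')
        ((Polynomial.aeval A' (p k)) c')
        = @inner ℂ H _ b ((A ^ n) ((Polynomial.aeval A (p k)) c)) := by
      intro k
      rw [adjoint_pow_inner]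
      have h2 : (A' ^ n) ((Polynomial.aeval A' (p k)) c')
          = (Polynomial.aeval A' (Polynomial.X ^ n * p k)) c' := by
        simp [map_mul, map_pow, Polynomial.aeval_X, ContinuousLinearMap.mul_apply]
      have h3 : (A ^ n) ((Polynomial.aeval A (p k)) c)
          = (Polynomial.aeval A (Polynomial.X ^ n * p k)) c := by
        simp [map_mul, map_pow, Polynomial.aeval_X, ContinuousLinearMap.mul_apply]
      rw [h2, h3, ← hsame]
    have h4 : Tendsto (fun k => @inner ℂ H _ b ((A ^ n) ((Polynomial.aeval A (p k)) c)))
        atTop (nhds 0) := by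
      have : Tendsto (fun k => (A ^ n) ((Polynomial.aeval A (p k)) c)) atTop (nhds 0) := by
        simpa [Function.comp_def] using ((A ^ n).continuous.tendsto 0).comp hA
      simpa [Function.comp_def] using (continuous_const.inner continuous_id).continuousAt.tendsto.comp this
    have := tendsto_nhds_unique (h1.congr (fun k => (heq k))) h4
    rw [← this]
  have hmem : y' ∈ Kᗮ := by
    rw [Submodule.mem_orthogonal]
    intro u hu
    induction hu using Submodule.span_induction with
    | mem x hx => obtain ⟨n, rfl⟩ := hx; exact key n
    | zero => simp
    | add x y _ _ hx hy => rw [inner_add_left, hx, hy, add_zero]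
    | smul a x _ hx => rw [inner_smul_left, hx, mul_zero]
  have hbot : Kᗮ = ⊥ := Submodule.topologicalClosure_eq_top_iff.mp hobs
  simpa [hbot] using hmem
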